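/- (Böhning's multinomial curvature bound.) Let c ≥ 2 and r ∈ ℝ^{c−1}, and define the multinomial probabilities w_j = e^{r_j}/(1 + Σ_{k=1}^{c−1} e^{r_k}) for j = 1, …, c−1. Then for every v ∈ ℝ^{c−1}, Σ_{j=1}^{c−1} w_j v_j² − (Σ_{j=1}^{c−1} w_j v_j)² ≤ (1/2)[ Σ_{j=1}^{c−1} v_j² − (1/c)(Σ_{j=1}^{c−1} v_j)² ]; equivalently, the matrix (1/2)(I − (1/c)𝟙𝟙ᵀ) − (diag(w) − w wᵀ) is positive semidefinite, where 𝟙 ∈ ℝ^{c−1} is the all-ones vector. -/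

import Mathlib

open Matrix

open Finset

private lemma bohning_aux1 (wj x M μ : ℝ) (h0 : 0 ≤ wj) (h1 : x ≤ M) (h2 : μ ≤ x) :
    wj * (x - (M + μ) / 2) ^ 2 ≤ wj * ((M - μ) / 2) ^ 2 := by
  nlinarith [mul_nonneg h0 (mul_nonneg (sub_nonneg.2 h1) (sub_nonneg.2 h2))]

lemma bohning_key (n : ℕ) (hn : 0 < n) (w : Fin n → ℝ)
    (hw0 : ∀ j, 0 ≤ w j) (hs1 : ∑ j, w j ≤ 1) (v : Fin n → ℝ) :
    ∑ j, w j * v j ^ 2 - (∑ j, w j * v j) ^ 2 ≤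
      (1 / 2) * (∑ j, v j ^ 2 - (1 / ((n : ℝ) + 1)) * (∑ j, v j) ^ 2) := by
  haveI : Nonempty (Fin n) := ⟨⟨0, hn⟩⟩
  obtain ⟨jM, -, hjM⟩ := Finset.exists_max_image (univ : Finset (Fin n)) v
    ⟨Classical.arbitrary _, mem_univ _⟩
  obtain ⟨jm, -, hjm⟩ := Finset.exists_min_image (univ : Finset (Fin n)) v
    ⟨Classical.arbitrary _, mem_univ _⟩
  obtain ⟨M, hM⟩ : ∃ x : ℝ, x = max (v jM) 0 := ⟨_, rfl⟩
  obtain ⟨μ, hμ⟩ : ∃ x : ℝ, x = min (v jm) 0 := ⟨_, rfl⟩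
  have hMu : ∀ j, v j ≤ M := fun j => hM ▸ le_max_of_le_left (hjM j (mem_univ j))
  have hmu : ∀ j, μ ≤ v j := fun j => hμ ▸ min_le_of_left_le (hjm j (mem_univ j))
  have hM0 : 0 ≤ M := hM ▸ le_max_right _ _
  have hμ0 : μ ≤ 0 := hμ ▸ min_le_right _ _
  obtain ⟨c, hc⟩ : ∃ x : ℝ, x = (n : ℝ) + 1 := ⟨_, rfl⟩
  have hcpos : (0:ℝ) < c := by rw [hc]; positivity
  obtain ⟨Sv, hSv⟩ : ∃ x : ℝ, x = ∑ j, v j := ⟨_, rfl⟩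
  obtain ⟨m, hm⟩ : ∃ x : ℝ, x = Sv / c := ⟨_, rfl⟩
  -- Step 1: variance bound
  have exp1 : ∑ j, w j * (v j - (M + μ) / 2) ^ 2
      = ∑ j, w j * v j ^ 2 - 2 * ((M + μ) / 2) * ∑ j, w j * v j
        + ((M + μ) / 2) ^ 2 * ∑ j, w j := by
    rw [Finset.mul_sum, Finset.mul_sum, ← Finset.sum_sub_distrib, ← Finset.sum_add_distrib]
    exact Finset.sum_congr rfl fun j _ => by ring
  have step1 : ∑ j, w j * v j ^ 2 - (∑ j, w j * v j) ^ 2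
      ≤ ∑ j, w j * (v j - (M + μ) / 2) ^ 2 + (1 - ∑ j, w j) * ((M + μ) / 2) ^ 2 := by
    rw [exp1]
    nlinarith [sq_nonneg ((∑ j, w j * v j) - (M + μ) / 2)]
  have step2 : ∑ j, w j * (v j - (M + μ) / 2) ^ 2 ≤ (∑ j, w j) * ((M - μ) / 2) ^ 2 := by
    rw [Finset.sum_mul]
    exact Finset.sum_le_sum fun j _ => bohning_aux1 (w j) (v j) M μ (hw0 j) (hMu j) (hmu j)
  have step3 : (1 - ∑ j, w j) * ((M + μ) / 2) ^ 2
      ≤ (1 - ∑ j, w j) * ((M - μ) / 2) ^ 2 := by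
    apply mul_le_mul_of_nonneg_left _ (by linarith)
    nlinarith [mul_nonneg hM0 (neg_nonneg.2 hμ0)]
  have varbound : ∑ j, w j * v j ^ 2 - (∑ j, w j * v j) ^ 2 ≤ (M - μ) ^ 2 / 4 := by
    nlinarith [step1, step2, step3]
  -- Step 2: RHS rewrite
  have exp2 : ∑ j, (v j - m) ^ 2 = ∑ j, v j ^ 2 - 2 * m * Sv + (n : ℝ) * m ^ 2 := by
    rw [hSv, Finset.mul_sum, ← Finset.sum_sub_distrib,
      show (n:ℝ) * m ^ 2 = ∑ _j : Fin n, m ^ 2 by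
        rw [Finset.sum_const, card_univ, Fintype.card_fin, nsmul_eq_mul],
      ← Finset.sum_add_distrib]
    exact Finset.sum_congr rfl fun j _ => by ring
  have rhs_eq : ∑ j, v j ^ 2 - (1 / c) * Sv ^ 2 = (∑ j, (v j - m) ^ 2) + m ^ 2 := by
    rw [exp2, hm, hc]
    field_simp
    ring
  -- Step 3: RHS lower bound
  have hnn : ∀ j ∈ univ, 0 ≤ (v j - m) ^ 2 := fun j _ => sq_nonneg _
  obtain ⟨T, hT⟩ : ∃ x : ℝ, x = ∑ j, (v j - m) ^ 2 := ⟨_, rfl⟩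
  have hTnn : 0 ≤ T := hT ▸ Finset.sum_nonneg hnn
  have rhs_lb : (M - μ) ^ 2 / 2 ≤ T + m ^ 2 := by
    clear exp1 exp2 step1 step2 step3 varbound rhs_eq hs1 hw0
    rcases le_or_gt 0 (v jM) with hM' | hM'
    · rcases le_or_gt (v jm) 0 with hm' | hm'
      · -- M = v jM, μ = v jm
        have hMe : M = v jM := by rw [hM]; exact max_eq_left hM'
        have hμe : μ = v jm := by rw [hμ]; exact min_eq_left hm'
        rcases eq_or_ne jM jm with he | he
        · have hMμ : M = μ := by rw [hMe, hμe, he]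
          nlinarith [sq_nonneg m]
        · have hpair := Finset.sum_le_sum_of_subset_of_nonneg
            (subset_univ ({jM, jm} : Finset (Fin n))) (fun j _ _ => sq_nonneg (v j - m))
          rw [Finset.sum_pair he, ← hT] at hpair
          rw [hMe, hμe]
          clear hT hnn hjM hjm
          nlinarith [sq_nonneg (v jM + v jm - 2 * m), sq_nonneg m]
      · -- μ = 0, M = v jM
        have hμe : μ = 0 := by rw [hμ]; exact min_eq_right hm'.le
        have hMe : M = v jM := by rw [hM]; exact max_eq_left hM'
        have := hT ▸ Finset.single_le_sum hnn (mem_univ jM)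
        rw [hMe, hμe]
        clear hT hnn hjM hjm
        nlinarith [sq_nonneg (v jM - 2 * m)]
    · -- M = 0, μ = v jm
      have hMe : M = 0 := by rw [hM]; exact max_eq_right hM'.le
      have hm' : v jm < 0 := lt_of_le_of_lt (hjm jM (mem_univ jM)) hM'
      have hμe : μ = v jm := by rw [hμ]; exact min_eq_left hm'.le
      have := hT ▸ Finset.single_le_sum hnn (mem_univ jm)
      rw [hMe, hμe]
      clear hT hnn hjM hjm
      nlinarith [sq_nonneg (v jm - 2 * m)]
  rw [← hc, ← hSv, rhs_eq, ← hT]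
  linarith

open Matrix in
private lemma bohning_mulVec_eq (n : ℕ) (w x : Fin n → ℝ) (c' : ℝ) :
    ((1 / 2 : ℝ) • ((1 : Matrix (Fin n) (Fin n) ℝ) -
        (1 / c') • Matrix.of (fun _ _ => (1 : ℝ))) -
      (Matrix.diagonal w - Matrix.vecMulVec w w)) *ᵥ x
    = fun i => (1 / 2) * (x i - (1 / c') * ∑ j, x j)
        - (w i * x i - w i * (∑ j, w j * x j)) := by
  have hJ : (Matrix.of (fun _ _ => (1:ℝ)) : Matrix (Fin n) (Fin n) ℝ) *ᵥ x
      = fun _ => ∑ j, x j := by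
    funext i; simp [Matrix.mulVec, dotProduct]
  have hV : Matrix.vecMulVec w w *ᵥ x = fun i => w i * ∑ j, w j * x j := by
    funext i
    simp only [Matrix.mulVec, dotProduct, Matrix.vecMulVec_apply, Finset.mul_sum]
    exact Finset.sum_congr rfl fun j _ => by ring
  have hD : Matrix.diagonal w *ᵥ x = fun i => w i * x i := by
    funext i; simp [Matrix.mulVec_diagonal]
  rw [Matrix.sub_mulVec, Matrix.sub_mulVec, Matrix.smul_mulVec, Matrix.sub_mulVec,
    Matrix.one_mulVec, Matrix.smul_mulVec, hJ, hV, hD]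
  funext i
  simp only [Pi.sub_apply, Pi.smul_apply, smul_eq_mul]

open Matrix in
private lemma bohning_hermitian (n : ℕ) (w : Fin n → ℝ) (c' : ℝ) :
    IsHermitian ((1 / 2 : ℝ) • ((1 : Matrix (Fin n) (Fin n) ℝ) -
        (1 / c') • Matrix.of (fun _ _ => (1 : ℝ))) -
      (Matrix.diagonal w - Matrix.vecMulVec w w)) := by
  unfold Matrix.IsHermitian
  ext i j
  simp only [conjTranspose_apply, Matrix.sub_apply, Matrix.smul_apply, Matrix.one_apply,
    Matrix.diagonal_apply, Matrix.vecMulVec_apply, Matrix.of_apply, smul_eq_mul, star_trivial]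
  rcases eq_or_ne i j with h | h
  · subst h; simp
  · simp [h, Ne.symm h, mul_comm]

open Matrix in
/-- Böhning's multinomial curvature bound: with probabilities
`w_j = e^{r_j}/(1 + Σ_k e^{r_k})`, for every `v`,
`Σ_j w_j v_j² − (Σ_j w_j v_j)² ≤ (1/2)[Σ_j v_j² − (1/c)(Σ_j v_j)²]`;
equivalently `(1/2)(I − (1/c)𝟙𝟙ᵀ) − (diag(w) − wwᵀ)` is positive
semidefinite. -/
theorem bohning_multinomial_curvature_bound
    (c : ℕ) (hc : 2 ≤ c) (r : Fin (c - 1) → ℝ)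
    (w : Fin (c - 1) → ℝ)
    (hw : ∀ j, w j = Real.exp (r j) / (1 + ∑ k, Real.exp (r k))) :
    (∀ v : Fin (c - 1) → ℝ,
      ∑ j, w j * v j ^ 2 - (∑ j, w j * v j) ^ 2 ≤
        (1 / 2) * (∑ j, v j ^ 2 - (1 / (c : ℝ)) * (∑ j, v j) ^ 2)) ∧
    ((1 / 2 : ℝ) • ((1 : Matrix (Fin (c - 1)) (Fin (c - 1)) ℝ) -
        (1 / (c : ℝ)) • Matrix.of (fun _ _ => (1 : ℝ))) -
      (Matrix.diagonal w - Matrix.vecMulVec w w)).PosSemidef := by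
  have hn : 0 < c - 1 := by omega
  have hcast : ((c - 1 : ℕ) : ℝ) + 1 = (c : ℝ) := by
    have h1 : (1:ℕ) ≤ c := by omega
    rw [Nat.cast_sub h1]; push_cast; ring
  have hT : (0:ℝ) ≤ ∑ k, Real.exp (r k) := Finset.sum_nonneg fun k _ => (Real.exp_pos _).le
  have hw0 : ∀ j, 0 ≤ w j := fun j => by
    rw [hw j]; positivity
  have hs1 : ∑ j, w j ≤ 1 := by
    have hsum : ∑ j, w j = (∑ j, Real.exp (r j)) / (1 + ∑ k, Real.exp (r k)) := by
      simp_rw [hw]; rw [← Finset.sum_div]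
    rw [hsum, div_le_one (by linarith)]; linarith
  have key : ∀ v : Fin (c - 1) → ℝ,
      ∑ j, w j * v j ^ 2 - (∑ j, w j * v j) ^ 2 ≤
        (1 / 2) * (∑ j, v j ^ 2 - (1 / (c : ℝ)) * (∑ j, v j) ^ 2) := by
    intro v
    have := bohning_key (c - 1) hn w hw0 hs1 v
    rwa [hcast] at this
  refine ⟨key, posSemidef_iff_dotProduct_mulVec.2 ⟨bohning_hermitian _ w _, fun x => ?_⟩⟩
  rw [bohning_mulVec_eq]
  obtain ⟨S, hS⟩ : ∃ y : ℝ, y = ∑ j, x j := ⟨_, rfl⟩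
  obtain ⟨P, hP⟩ : ∃ y : ℝ, y = ∑ j, w j * x j := ⟨_, rfl⟩
  have hdot : dotProduct (star x) (fun i => (1 / 2) * (x i - (1 / (c:ℝ)) * ∑ j, x j)
        - (w i * x i - w i * (∑ j, w j * x j)))
      = (1 / 2) * (∑ j, x j ^ 2 - (1 / (c : ℝ)) * (∑ j, x j) ^ 2)
        - (∑ j, w j * x j ^ 2 - (∑ j, w j * x j) ^ 2) := by
    simp only [dotProduct, Pi.star_apply, star_trivial, ← hS, ← hP]
    have h1 : ∀ i ∈ Finset.univ, x i * ((1 / 2) * (x i - (1 / (c:ℝ)) * S)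
          - (w i * x i - w i * P))
        = (1 / 2) * x i ^ 2 - (1 / (c:ℝ)) * (1 / 2) * (S * x i)
          - w i * x i ^ 2 + P * (w i * x i) := fun i _ => by ring
    rw [Finset.sum_congr rfl h1, Finset.sum_add_distrib, Finset.sum_sub_distrib,
      Finset.sum_sub_distrib, ← Finset.mul_sum, ← Finset.mul_sum, ← Finset.mul_sum, ← hS]
    rw [← Finset.mul_sum, ← hP]
    ring
  rw [hdot]
  have := key x
  linarith
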